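/- arXiv:0907.5570 — 3 statements merged into one kernel-verified Lean document; each statement's English description precedes it below -/
import Mathlib

section
/- Let a topological groupoid G act freely and properly on its unit space G⁰ (via γ·s(γ) = r(γ)). Then for each unit u ∈ G⁰ and each open neighborhood N of u in G, there exists an open neighborhood U of u in G⁰ such that every γ ∈ G with γ·U ∩ U ≠ ∅ (i.e. s(γ) ∈ U and r(γ) ∈ U) lies in N. -/
open MeasureTheory Topology Set

structure TopGroupoid (G : Type*) [TopologicalSpace G] where
  src : G → G
  rng : G → G
  mul : G → G → G
  inv : G → G
  continuous_src : Continuous src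
  continuous_rng : Continuous rng
  continuous_inv : Continuous inv
  continuous_mul : Continuous fun p : {p : G × G // src p.1 = rng p.2} => mul p.1.1 p.1.2
  src_rng : ∀ γ, src (rng γ) = rng γ
  rng_rng : ∀ γ, rng (rng γ) = rng γ
  src_src : ∀ γ, src (src γ) = src γ
  rng_src : ∀ γ, rng (src γ) = src γ
  rng_mul : ∀ γ η, src γ = rng η → rng (mul γ η) = rng γ
  src_mul : ∀ γ η, src γ = rng η → src (mul γ η) = src η
  mul_assoc' : ∀ γ η ζ, src γ = rng η → src η = rng ζ → mul (mul γ η) ζ = mul γ (mul η ζ)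
  unit_mul : ∀ γ, mul (rng γ) γ = γ
  mul_unit : ∀ γ, mul γ (src γ) = γ
  src_inv : ∀ γ, src (inv γ) = rng γ
  rng_inv : ∀ γ, rng (inv γ) = src γ
  mul_inv : ∀ γ, mul γ (inv γ) = rng γ
  inv_mul : ∀ γ, mul (inv γ) γ = src γ

namespace TopGroupoid

variable {G : Type*} [TopologicalSpace G] (S : TopGroupoid G)

/-- The unit space `G⁰` of the groupoid. -/
def units : Set G := {u | S.rng u = u ∧ S.src u = u}

/-- The source of an arrow, as an element of the unit space. -/
def srcU (γ : G) : S.units := ⟨S.src γ, S.rng_src γ, S.src_src γ⟩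

/-- The range of an arrow, as an element of the unit space. -/
def rngU (γ : G) : S.units := ⟨S.rng γ, S.rng_rng γ, S.src_rng γ⟩

/-- Freeness of the natural action of `G` on its unit space:
`γ · s(γ) = r(γ)`, so `γ·u = u` forces `γ` to be a unit. -/
def IsFree : Prop := ∀ γ : G, S.rng γ = S.src γ → γ ∈ S.units

/-- Properness of the natural action of `G` on its unit space:
`γ ↦ (r(γ), s(γ))` is a proper map. -/
def IsProper : Prop := IsProperMap (fun γ : G => (S.rng γ, S.src γ))

/-- Product of two subsets of a groupoid. -/
def setMul (A B : Set G) : Set G :=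
  {z | ∃ a ∈ A, ∃ b ∈ B, S.src a = S.rng b ∧ z = S.mul a b}

end TopGroupoid

/-- A Haar system `{λᵘ}` on a topological groupoid. -/
structure HaarSystem {G : Type*} [TopologicalSpace G] [MeasurableSpace G]
    (S : TopGroupoid G) where
  lam : G → MeasureTheory.Measure G
  supported : ∀ u : G, lam u {γ | S.rng γ ≠ u} = 0
  invariant : ∀ γ : G, (lam (S.src γ)).map (S.mul γ) = lam (S.rng γ)
  cts : ∀ ψ : G → ℝ, Continuous ψ → HasCompactSupport ψ →
    Continuous fun u => ∫ γ, ψ γ ∂ lam u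
  full : ∀ u ∈ S.units, ∀ V : Set G, IsOpen V → u ∈ V → 0 < lam u V
  bdd : ∀ K : Set G, IsCompact K → ∃ C : ENNReal, C < ⊤ ∧ ∀ u : G, lam u K ≤ C

/-- A continuous action of a topological groupoid `S` on a space `X`,
with anchor map `r_X : X → G⁰`. -/
structure GroupoidAction {G : Type*} [TopologicalSpace G] (S : TopGroupoid G)
    (X : Type*) [TopologicalSpace X] where
  anchor : X → G
  anchor_mem : ∀ x, anchor x ∈ S.units
  continuous_anchor : Continuous anchor
  act : G → X → X
  act_anchor : ∀ γ x, S.src γ = anchor x → anchor (act γ x) = S.rng γ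
  act_unit : ∀ x, act (anchor x) x = x
  act_mul : ∀ γ η x, S.src γ = S.rng η → S.src η = anchor x →
    act (S.mul γ η) x = act γ (act η x)
  continuous_act :
    Continuous fun p : {p : G × X // S.src p.1 = anchor p.2} => act p.1.1 p.1.2

namespace GroupoidAction

variable {G : Type*} [TopologicalSpace G] {S : TopGroupoid G}
variable {X : Type*} [TopologicalSpace X]

/-- Properness of a groupoid action: `(γ, x) ↦ (γ·x, x)` is a proper map. -/
def IsProper (A : GroupoidAction S X) : Prop :=
  IsProperMap fun p : {p : G × X // S.src p.1 = A.anchor p.2} =>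
    (A.act p.1.1 p.1.2, p.1.2)

/-- The orbit relation `x ~ γ·x` on `X`. -/
def orbitRel (A : GroupoidAction S X) : X → X → Prop :=
  fun x y => ∃ γ : G, S.src γ = A.anchor x ∧ A.act γ x = y

end GroupoidAction

/-- An upper semicontinuous C*-bundle (total-space picture), recording the data
needed here: continuous open surjective projection, upper semicontinuous norm,
zero section, and continuous fiberwise operations. -/
structure USCBundle (X : Type*) [TopologicalSpace X]
    (E : Type*) [TopologicalSpace E] where
  proj : E → X
  continuous_proj : Continuous proj
  open_proj : IsOpenMap proj
  surj_proj : Function.Surjective proj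
  nrm : E → ℝ
  nrm_nonneg : ∀ a, 0 ≤ nrm a
  nrm_usc : ∀ c : ℝ, IsOpen {a | nrm a < c}
  zero : X → E
  proj_zero : ∀ x, proj (zero x) = x
  continuous_zero : Continuous zero
  nrm_zero : ∀ x, nrm (zero x) = 0
  add : E → E → E
  proj_add : ∀ a b, proj a = proj b → proj (add a b) = proj a
  continuous_add : Continuous fun p : {p : E × E // proj p.1 = proj p.2} => add p.1.1 p.1.2
  sub : E → E → E
  proj_sub : ∀ a b, proj a = proj b → proj (sub a b) = proj a
  continuous_sub : Continuous fun p : {p : E × E // proj p.1 = proj p.2} => sub p.1.1 p.1.2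
  emul : E → E → E
  continuous_emul : Continuous fun p : {p : E × E // proj p.1 = proj p.2} => emul p.1.1 p.1.2
  estar : E → E
  continuous_estar : Continuous estar

/-- If a groupoid `G` acts freely and properly on its unit space, then for each
unit `u` and open neighborhood `N` of `u` in `G`, there is an open neighborhood
`U` of `u` in `G⁰` such that `{γ : γ·U ∩ U ≠ ∅} ⊆ N`. -/
theorem free_proper_small_neighborhood {G : Type*} [TopologicalSpace G]
    [T2Space G] [LocallyCompactSpace G] [SecondCountableTopology G]
    (S : TopGroupoid G) (hfree : S.IsFree) (hproper : S.IsProper)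
    (u : G) (hu : u ∈ S.units) (N : Set G) (hN : IsOpen N) (huN : u ∈ N) :
    ∃ U : Set G, IsOpen U ∧ u ∈ U ∧
      ∀ γ : G, S.src γ ∈ U ∩ S.units → S.rng γ ∈ U → γ ∈ N := by
  obtain ⟨K, hK, hKu⟩ := exists_compact_mem_nhds u
  set f : G → G × G := fun γ => (S.rng γ, S.src γ) with hf
  have hpre : IsCompact (f ⁻¹' (K ×ˢ K)) := hproper.isCompact_preimage (hK.prod hK)
  set C : Set G := f ⁻¹' (K ×ˢ K) ∩ Nᶜ with hC
  have hCcomp : IsCompact C := hpre.inter_right hN.isClosed_compl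
  have hDcomp : IsCompact (f '' C) := hCcomp.image (S.continuous_rng.prodMk S.continuous_src)
  have hDclosed : IsClosed (f '' C) := hDcomp.isClosed
  have huu : (u, u) ∉ f '' C := by
    rintro ⟨γ, ⟨-, hγN⟩, hγ⟩
    have h1 : S.rng γ = u := congrArg Prod.fst hγ
    have h2 : S.src γ = u := congrArg Prod.snd hγ
    have hunit := hfree γ (h1.trans h2.symm)
    exact hγN (by rw [← hunit.1, h1]; exact huN)
  obtain ⟨U₁, U₂, hU₁, hU₂, hu₁, hu₂, hsub⟩ :=
    isOpen_prod_iff.mp hDclosed.isOpen_compl u u huu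
  refine ⟨U₁ ∩ U₂ ∩ interior K, (hU₁.inter hU₂).inter isOpen_interior,
    ⟨⟨hu₁, hu₂⟩, mem_interior_iff_mem_nhds.mpr hKu⟩, ?_⟩
  rintro γ ⟨⟨⟨hs₁, hs₂⟩, hsK⟩, -⟩ ⟨⟨hr₁, hr₂⟩, hrK⟩
  by_contra hγN
  have hγC : γ ∈ C := ⟨⟨interior_subset hrK, interior_subset hsK⟩, hγN⟩
  exact hsub (mk_mem_prod hr₁ hs₂) ⟨γ, hγC, rfl⟩
end

section
/- Let G be a locally compact Hausdorff groupoid, F ∈ C_c(G), W₀ a conditionally compact open neighborhood of G⁰, and K a compact subset of G. For every δ > 0 there exists an open neighborhood N of G⁰ in G such that for all γ ∈ K and all η ∈ N with r(η) = r(γ), we have |F(η⁻¹γ) − F(γ)| < δ. -/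
open MeasureTheory Topology Set

/-- Uniform continuity of left translation near the unit space: for
`F ∈ C_c(G)`, `W₀` a conditionally compact open neighborhood of `G⁰`, `K ⊆ G`
compact and `δ > 0`, there is an open neighborhood `N` of `G⁰` such that
`|F(η⁻¹γ) − F(γ)| < δ` for all `γ ∈ K` and `η ∈ N` with `r(η) = r(γ)`. -/
theorem translation_uniformly_small {G : Type*} [TopologicalSpace G]
    [T2Space G] [LocallyCompactSpace G]
    (S : TopGroupoid G)
    (F : G → ℂ) (hF : Continuous F) (hFc : HasCompactSupport F)
    (W₀ : Set G) (hW₀open : IsOpen W₀) (hW₀units : S.units ⊆ W₀)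
    (hW₀cc : ∀ V : Set G, IsCompact V →
      IsCompact (closure (S.setMul V W₀)) ∧ IsCompact (closure (S.setMul W₀ V)))
    (K : Set G) (hK : IsCompact K) (δ : ℝ) (hδ : 0 < δ) :
    ∃ N : Set G, IsOpen N ∧ S.units ⊆ N ∧
      ∀ γ ∈ K, ∀ η ∈ N, S.rng η = S.rng γ →
        ‖F (S.mul (S.inv η) γ) - F γ‖ < δ := by
  classical
  set L : Set G := closure (S.setMul (S.rng '' K) W₀) with hLdef
  have hL : IsCompact L := (hW₀cc (S.rng '' K) (hK.image S.continuous_rng)).1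
  set T : Set (G × G) := {p | S.rng p.1 = S.rng p.2} with hTdef
  have hTclosed : IsClosed T :=
    isClosed_eq (S.continuous_rng.comp continuous_fst)
      (S.continuous_rng.comp continuous_snd)
  set f : T → ℝ := fun p => ‖F (S.mul (S.inv p.1.1) p.1.2) - F p.1.2‖ with hfdef
  have hfcont : Continuous f := by
    have hmap : Continuous fun p : T =>
        (⟨(S.inv p.1.1, p.1.2), by rw [S.src_inv]; exact p.2⟩ :
          {q : G × G // S.src q.1 = S.rng q.2}) := by
      apply Continuous.subtype_mk
      exact (S.continuous_inv.comp (continuous_fst.comp continuous_subtype_val)).prodMk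
        (continuous_snd.comp continuous_subtype_val)
    have h1 : Continuous fun p : T => F (S.mul (S.inv p.1.1) p.1.2) :=
      hF.comp (S.continuous_mul.comp hmap)
    exact ((h1.sub (hF.comp (continuous_snd.comp continuous_subtype_val)))).norm
  have hclosed : IsClosed (Subtype.val '' (f ⁻¹' Set.Ici δ)) :=
    hTclosed.isClosedEmbedding_subtypeVal.isClosedMap _
      (isClosed_Ici.preimage hfcont)
  set D : Set (G × G) := (Subtype.val '' (f ⁻¹' Set.Ici δ)) ∩ (L ×ˢ K) with hDdef
  have hDcomp : IsCompact D := ((hL.prod hK).inter_left hclosed)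
  set Bad : Set G := Prod.fst '' D with hBaddef
  have hBadcomp : IsCompact Bad := hDcomp.image continuous_fst
  refine ⟨W₀ \ Bad, hW₀open.sdiff hBadcomp.isClosed, ?_, ?_⟩
  · intro u hu
    refine ⟨hW₀units hu, ?_⟩
    rintro ⟨⟨η, γ⟩, ⟨⟨⟨p, hp, hval⟩, hmem⟩, huη⟩⟩
    obtain rfl : η = u := huη
    have hval' : (p : G × G) = (η, γ) := hval
    have hT1 : S.rng η = S.rng γ := by
      have h := p.2
      rw [hval'] at h
      exact h
    obtain ⟨hru, hsu⟩ := hu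
    have hinvu : S.inv η = η := by
      have h1 : S.mul η (S.inv η) = S.rng η := S.mul_inv η
      have h2 : S.mul (S.rng (S.inv η)) (S.inv η) = S.inv η := S.unit_mul (S.inv η)
      rw [S.rng_inv, hsu] at h2
      rw [h1, hru] at h2
      exact h2.symm
    have hug : η = S.rng γ := by rw [← hT1, hru]
    have hfp : δ ≤ f p := hp
    have hz : f p = 0 := by
      show ‖F (S.mul (S.inv (p : G × G).1) (p : G × G).2) - F (p : G × G).2‖ = 0
      rw [hval']
      show ‖F (S.mul (S.inv η) γ) - F γ‖ = 0
      rw [hinvu, hug, S.unit_mul γ, sub_self, norm_zero]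
    rw [hz] at hfp
    linarith
  · intro γ hγ η hη hrng
    by_contra hbad
    push_neg at hbad
    apply hη.2
    have hηL : η ∈ L := by
      apply subset_closure
      refine ⟨S.rng γ, ⟨γ, hγ, rfl⟩, η, hη.1, ?_, ?_⟩
      · rw [S.src_rng, hrng]
      · rw [← hrng, S.unit_mul η]
    exact ⟨(η, γ), ⟨⟨⟨(η, γ), hrng⟩, hbad, rfl⟩, ⟨hηL, hγ⟩⟩, rfl⟩
end

section
/- Let G be a second countable locally compact Hausdorff groupoid with Haar system acting freely and properly on its unit space G⁰. Then the span of functions of the form γ ↦ f(r(γ))·\overline{g(s(γ))}, for f, g ∈ C_c(G⁰), is dense in C_c(G) in the inductive limit topology. -/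
open MeasureTheory Topology Set

theorem TopGroupoid.rs_injective {G : Type*} [TopologicalSpace G] (S : TopGroupoid G)
    (hfree : S.IsFree) : Function.Injective (fun γ : G => (S.rng γ, S.src γ)) := by
  intro γ η hγη
  have hr : S.rng γ = S.rng η := congrArg Prod.fst hγη
  have hs : S.src γ = S.src η := congrArg Prod.snd hγη
  have hcomp : S.src γ = S.rng (S.inv η) := by rw [S.rng_inv, hs]
  set ζ := S.mul γ (S.inv η) with hζ
  have h1 : S.rng ζ = S.rng γ := S.rng_mul _ _ hcomp
  have h2 : S.src ζ = S.rng γ := by rw [S.src_mul _ _ hcomp, S.src_inv, hr]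
  have hunit : ζ ∈ S.units := hfree ζ (h1.trans h2.symm)
  have hζ_eq : ζ = S.rng η := by rw [← hr, ← h1]; exact hunit.1.symm
  have key : S.mul ζ η = η := by rw [hζ_eq]; exact S.unit_mul η
  have key2 : S.mul ζ η = γ := by
    rw [hζ, S.mul_assoc' γ (S.inv η) η hcomp (S.src_inv η), S.inv_mul, ← hs, S.mul_unit]
  rw [← key2, key]

/-- If `G` (second countable, locally compact Hausdorff, with Haar system) acts
freely and properly on its unit space, then the span of the functions
`γ ↦ f(r(γ))·conj(g(s(γ)))`, `f, g ∈ C_c(G⁰)`, is dense in `C_c(G)` in the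
inductive limit topology. -/
theorem rank_one_span_dense {G : Type*} [TopologicalSpace G] [T2Space G]
    [LocallyCompactSpace G] [SecondCountableTopology G] [MeasurableSpace G]
    (S : TopGroupoid G) (hfree : S.IsFree) (hproper : S.IsProper)
    (H : HaarSystem S)
    (F : G → ℂ) (hF : Continuous F) (hFc : HasCompactSupport F) :
    ∃ K : Set G, IsCompact K ∧ ∀ δ > (0:ℝ),
      ∃ (n : ℕ) (f g : Fin n → S.units → ℂ),
        (∀ i, Continuous (f i) ∧ HasCompactSupport (f i) ∧
          Continuous (g i) ∧ HasCompactSupport (g i)) ∧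
        tsupport (fun γ : G =>
          ∑ i, f i (S.rngU γ) * starRingEnd ℂ (g i (S.srcU γ))) ⊆ K ∧
        ∀ γ : G,
          ‖F γ - ∑ i, f i (S.rngU γ) * starRingEnd ℂ (g i (S.srcU γ))‖ < δ := by
  classical
  have hconj : Continuous fun z : ℂ => (starRingEnd ℂ) z := continuous_star
  have hrs_cont : Continuous (fun γ : G => (S.rng γ, S.src γ)) :=
    S.continuous_rng.prodMk S.continuous_src
  have hUnits_closed : IsClosed S.units :=
    (isClosed_eq S.continuous_rng continuous_id).inter
      (isClosed_eq S.continuous_src continuous_id)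
  haveI : LocallyCompactSpace S.units := hUnits_closed.locallyCompactSpace
  have hrngU_cont : Continuous S.rngU := Continuous.subtype_mk S.continuous_rng _
  have hsrcU_cont : Continuous S.srcU := Continuous.subtype_mk S.continuous_src _
  set h : G → S.units × S.units := fun γ => (S.rngU γ, S.srcU γ) with hh_def
  have hcont : Continuous h := hrngU_cont.prodMk hsrcU_cont
  have hinj : Function.Injective h := by
    intro a b hab
    apply S.rs_injective hfree
    have h1 : S.rngU a = S.rngU b := congrArg Prod.fst hab
    have h2 : S.srcU a = S.srcU b := congrArg Prod.snd hab
    exact Prod.ext (congrArg Subtype.val h1) (congrArg Subtype.val h2)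
  set K₀ : Set G := tsupport F with hK₀_def
  have hK₀ : IsCompact K₀ := hFc
  have hC₀ : IsCompact ((S.rngU '' K₀) ∪ (S.srcU '' K₀)) :=
    (hK₀.image hrngU_cont).union (hK₀.image hsrcU_cont)
  obtain ⟨φ, hφ_one, -, hφ_supp, hφ_mem⟩ :=
    exists_continuous_one_zero_of_isCompact hC₀ isClosed_empty (Set.disjoint_empty _)
  set T : Set S.units := tsupport φ with hT_def
  have hT : IsCompact T := hφ_supp
  set K : Set G :=
    (fun γ : G => (S.rng γ, S.src γ)) ⁻¹' ((Subtype.val '' T) ×ˢ (Subtype.val '' T)) with hK_def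
  have hKcpt : IsCompact K := hproper.isCompact_preimage
    ((hT.image continuous_subtype_val).prod (hT.image continuous_subtype_val))
  have hKmem : ∀ γ : G, γ ∈ K ↔ (S.rngU γ ∈ T ∧ S.srcU γ ∈ T) := by
    intro γ
    have e1 : S.rng γ = (S.rngU γ : G) := rfl
    have e2 : S.src γ = (S.srcU γ : G) := rfl
    simp only [hK_def, Set.mem_preimage, Set.mem_prod, e1, e2,
      Subtype.val_injective.mem_set_image]
  have hKclosed : IsClosed K :=
    (((hT.image continuous_subtype_val).isClosed).prod
      ((hT.image continuous_subtype_val).isClosed)).preimage hrs_cont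
  have hφT : ∀ u, u ∉ T → φ u = 0 := fun u hu => image_eq_zero_of_notMem_tsupport hu
  have hC₀T : ((S.rngU '' K₀) ∪ (S.srcU '' K₀)) ⊆ T := by
    intro u hu
    apply subset_closure
    rw [Function.mem_support, hφ_one hu]
    exact one_ne_zero
  have hK₀K : K₀ ⊆ K := fun γ hγ => (hKmem γ).mpr
    ⟨hC₀T (Or.inl ⟨γ, hγ, rfl⟩), hC₀T (Or.inr ⟨γ, hγ, rfl⟩)⟩
  refine ⟨K, hKcpt, fun δ hδ => ?_⟩
  -- the compact image of `K` in `G⁰ × G⁰`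
  set L : Set (S.units × S.units) := h '' K with hL_def
  have hL : IsCompact L := hKcpt.image hcont
  haveI : CompactSpace L := isCompact_iff_compactSpace.mp hL
  haveI : CompactSpace K := isCompact_iff_compactSpace.mp hKcpt
  set m : K → L := fun x => ⟨h x.1, Set.mem_image_of_mem h x.2⟩ with hm_def
  have hm_cont : Continuous m := (hcont.comp continuous_subtype_val).subtype_mk _
  have hm_bij : Function.Bijective m := by
    constructor
    · intro a b hab
      exact Subtype.ext (hinj (congrArg Subtype.val hab))
    · rintro ⟨z, γ, hγ, rfl⟩
      exact ⟨⟨γ, hγ⟩, rfl⟩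
  set e : (K : Set G) ≃ₜ L :=
    Continuous.homeoOfEquivCompactToT2 (f := Equiv.ofBijective m hm_bij) hm_cont with he_def
  set F' : C(L, ℂ) := ⟨fun z => F ((e.symm z : K) : G),
    hF.comp (continuous_subtype_val.comp e.symm.continuous)⟩ with hF'_def
  have hF'_key : ∀ γ (hγ : γ ∈ K), F' ⟨h γ, Set.mem_image_of_mem h hγ⟩ = F γ := by
    intro γ hγ
    have heq2 : e ⟨γ, hγ⟩ = (⟨h γ, Set.mem_image_of_mem h hγ⟩ : L) := rfl
    show F ((e.symm (⟨h γ, Set.mem_image_of_mem h hγ⟩ : L) : K) : G) = F γ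
    rw [← heq2, e.symm_apply_apply]
  -- a cutoff which is one on the projections of `L`
  have hCψ : IsCompact ((Prod.fst '' L) ∪ (Prod.snd '' L)) :=
    (hL.image continuous_fst).union (hL.image continuous_snd)
  obtain ⟨ψ, hψ_one, -, hψ_supp, hψ_mem⟩ :=
    exists_continuous_one_zero_of_isCompact hCψ isClosed_empty (Set.disjoint_empty _)
  -- the set of rank-one functions
  set P : Set C(L, ℂ) := {p | ∃ f g : S.units → ℂ, Continuous f ∧ HasCompactSupport f ∧
    Continuous g ∧ HasCompactSupport g ∧
    ∀ z : L, p z = f (z : S.units × S.units).1 *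
      (starRingEnd ℂ) (g (z : S.units × S.units).2)} with hP_def
  have hmk : ∀ (f g : S.units → ℂ), Continuous f → Continuous g →
      Continuous (fun z : L => f (z : S.units × S.units).1 *
        (starRingEnd ℂ) (g (z : S.units × S.units).2)) := by
    intro f g hf hg
    exact (hf.comp (continuous_fst.comp continuous_subtype_val)).mul
      (hconj.comp (hg.comp (continuous_snd.comp continuous_subtype_val)))
  have hψℂ : HasCompactSupport (fun u : S.units => ((ψ u : ℝ) : ℂ)) :=
    hψ_supp.comp_left (g := Complex.ofReal) Complex.ofReal_zero
  have hφℂ : HasCompactSupport (fun u : S.units => ((φ u : ℝ) : ℂ)) :=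
    hφ_supp.comp_left (g := Complex.ofReal) Complex.ofReal_zero
  have hone : (1 : C(L, ℂ)) ∈ P := by
    refine ⟨fun u => (ψ u : ℂ), fun u => (ψ u : ℂ),
      Complex.continuous_ofReal.comp ψ.continuous, hψℂ,
      Complex.continuous_ofReal.comp ψ.continuous, hψℂ, fun z => ?_⟩
    have h1 : ψ (z : S.units × S.units).1 = 1 :=
      hψ_one (Or.inl ⟨(z : S.units × S.units), z.2, rfl⟩)
    have h2 : ψ (z : S.units × S.units).2 = 1 :=
      hψ_one (Or.inr ⟨(z : S.units × S.units), z.2, rfl⟩)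
    simp [h1, h2, Complex.conj_ofReal]
  have hmulP : ∀ a ∈ P, ∀ b ∈ P, a * b ∈ P := by
    rintro a ⟨f1, g1, hf1, hf1c, hg1, hg1c, hv1⟩ b ⟨f2, g2, hf2, hf2c, hg2, hg2c, hv2⟩
    refine ⟨fun u => f1 u * f2 u, fun u => g1 u * g2 u, hf1.mul hf2, hf1c.mul_right,
      hg1.mul hg2, hg1c.mul_right, fun z => ?_⟩
    rw [ContinuousMap.mul_apply, hv1 z, hv2 z, map_mul]
    ring
  have hstarP : ∀ p ∈ P, star p ∈ P := by
    rintro p ⟨f, g, hf, hfc, hg, hgc, hv⟩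
    refine ⟨fun u => (starRingEnd ℂ) (f u), fun u => (starRingEnd ℂ) (g u),
      hconj.comp hf, ?_, hconj.comp hg, ?_, fun z => ?_⟩
    · exact hfc.comp_left (g := (starRingEnd ℂ)) (map_zero _)
    · exact hgc.comp_left (g := (starRingEnd ℂ)) (map_zero _)
    · rw [ContinuousMap.star_apply, hv z, star_mul']
      rfl
  set M : Submonoid C(L, ℂ) := ⟨⟨P, fun {a b} ha hb => hmulP a ha b hb⟩, hone⟩ with hM_def
  set A : StarSubalgebra ℂ C(L, ℂ) := StarAlgebra.adjoin ℂ P with hA_def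
  have hPA : P ⊆ (A : Set C(L, ℂ)) := StarAlgebra.subset_adjoin ℂ P
  have hsep : A.SeparatesPoints := by
    intro x y hxy
    have hvne : (x : S.units × S.units) ≠ (y : S.units × S.units) :=
      fun hc => hxy (Subtype.ext hc)
    by_cases hc1 : (x : S.units × S.units).1 = (y : S.units × S.units).1
    · -- second coordinates differ
      have hc2 : (x : S.units × S.units).2 ≠ (y : S.units × S.units).2 := by
        intro hc2
        exact hvne (Prod.ext hc1 hc2)
      obtain ⟨g₀, hg_one, hg_zero, hg_supp, -⟩ :=
        exists_continuous_one_zero_of_isCompact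
          (isCompact_singleton (x := (x : S.units × S.units).2)) isClosed_singleton
          (Set.disjoint_singleton.mpr hc2)
      obtain ⟨f₀, hf_one, -, hf_supp, -⟩ :=
        exists_continuous_one_zero_of_isCompact
          (isCompact_singleton (x := (x : S.units × S.units).1)) isClosed_empty
          (Set.disjoint_empty _)
      set pfun : L → ℂ := fun z => ((f₀ (z : S.units × S.units).1 : ℝ) : ℂ) *
        (starRingEnd ℂ) ((g₀ (z : S.units × S.units).2 : ℝ) : ℂ) with hpfun
      have hpmem : (⟨pfun, hmk _ _ (Complex.continuous_ofReal.comp f₀.continuous)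
          (Complex.continuous_ofReal.comp g₀.continuous)⟩ : C(L, ℂ)) ∈ P := by
        refine ⟨fun u => (f₀ u : ℂ), fun u => (g₀ u : ℂ),
          Complex.continuous_ofReal.comp f₀.continuous,
          hf_supp.comp_left (g := Complex.ofReal) Complex.ofReal_zero,
          Complex.continuous_ofReal.comp g₀.continuous,
          hg_supp.comp_left (g := Complex.ofReal) Complex.ofReal_zero, fun z => rfl⟩
      refine ⟨pfun, ⟨_, hPA hpmem, rfl⟩, ?_⟩
      have hx : pfun x = 1 := by
        simp [hpfun, hf_one rfl, hg_one rfl, Complex.conj_ofReal]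
      have hy : pfun y = 0 := by
        simp [hpfun, hg_zero rfl, Complex.conj_ofReal]
      rw [hx, hy]; exact one_ne_zero
    · obtain ⟨f₀, hf_one, hf_zero, hf_supp, -⟩ :=
        exists_continuous_one_zero_of_isCompact
          (isCompact_singleton (x := (x : S.units × S.units).1)) isClosed_singleton
          (Set.disjoint_singleton.mpr hc1)
      obtain ⟨g₀, hg_one, -, hg_supp, -⟩ :=
        exists_continuous_one_zero_of_isCompact
          (isCompact_singleton (x := (x : S.units × S.units).2)) isClosed_empty
          (Set.disjoint_empty _)
      set pfun : L → ℂ := fun z => ((f₀ (z : S.units × S.units).1 : ℝ) : ℂ) *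
        (starRingEnd ℂ) ((g₀ (z : S.units × S.units).2 : ℝ) : ℂ) with hpfun
      have hpmem : (⟨pfun, hmk _ _ (Complex.continuous_ofReal.comp f₀.continuous)
          (Complex.continuous_ofReal.comp g₀.continuous)⟩ : C(L, ℂ)) ∈ P := by
        refine ⟨fun u => (f₀ u : ℂ), fun u => (g₀ u : ℂ),
          Complex.continuous_ofReal.comp f₀.continuous,
          hf_supp.comp_left (g := Complex.ofReal) Complex.ofReal_zero,
          Complex.continuous_ofReal.comp g₀.continuous,
          hg_supp.comp_left (g := Complex.ofReal) Complex.ofReal_zero, fun z => rfl⟩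
      refine ⟨pfun, ⟨_, hPA hpmem, rfl⟩, ?_⟩
      have hx : pfun x = 1 := by
        simp [hpfun, hf_one rfl, hg_one rfl, Complex.conj_ofReal]
      have hy : pfun y = 0 := by
        simp [hpfun, hf_zero rfl]
      rw [hx, hy]; exact one_ne_zero
  have htop := ContinuousMap.starSubalgebra_topologicalClosure_eq_top_of_separatesPoints A hsep
  have hF'cl : F' ∈ closure (A : Set C(L, ℂ)) := by
    have h1 : F' ∈ A.topologicalClosure := by rw [htop]; exact StarSubalgebra.mem_top
    exact h1
  obtain ⟨p, hpA, hpd⟩ := Metric.mem_closure_iff.mp hF'cl δ hδ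
  have hp_span : p ∈ Submodule.span ℂ P := by
    have hstar_sub : star P ⊆ P := by
      intro a ha
      have h1 : star a ∈ P := Set.mem_star.mp ha
      have := hstarP (star a) h1
      rwa [star_star] at this
    have h1 : p ∈ Algebra.adjoin ℂ (P ∪ star P) := hpA
    have h3 : Algebra.adjoin ℂ (P ∪ star P) = Algebra.adjoin ℂ P :=
      le_antisymm
        (Algebra.adjoin_le (Set.union_subset Algebra.subset_adjoin
          (fun a ha => Algebra.subset_adjoin (hstar_sub ha))))
        (Algebra.adjoin_mono Set.subset_union_left)
    rw [h3] at h1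
    have h4 : p ∈ Submodule.span ℂ ((Submonoid.closure P : Submonoid C(L, ℂ)) : Set C(L, ℂ)) := by
      rw [← Algebra.adjoin_eq_span]
      exact h1
    have h5 : ((Submonoid.closure P : Submonoid C(L, ℂ)) : Set C(L, ℂ)) ⊆ P := by
      have : Submonoid.closure P ≤ M := Submonoid.closure_le.mpr (fun a ha => ha)
      exact fun a ha => this ha
    exact Submodule.span_le.mpr (h5.trans Submodule.subset_span) h4
  obtain ⟨n, c, q, hq⟩ := Submodule.mem_span_set'.mp hp_span
  have hrep : ∀ i : Fin n, ∃ fg : (S.units → ℂ) × (S.units → ℂ),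
      Continuous fg.1 ∧ HasCompactSupport fg.1 ∧ Continuous fg.2 ∧ HasCompactSupport fg.2 ∧
      ∀ z : L, (q i : C(L, ℂ)) z = fg.1 (z : S.units × S.units).1 *
        (starRingEnd ℂ) (fg.2 (z : S.units × S.units).2) := by
    intro i
    obtain ⟨f, g, h1, h2, h3, h4, h5⟩ := (q i).2
    exact ⟨(f, g), h1, h2, h3, h4, h5⟩
  choose fg hfg1 hfg2 hfg3 hfg4 hfgval using hrep
  set f : Fin n → S.units → ℂ := fun i u => (φ u : ℂ) * (c i * (fg i).1 u) with hf_def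
  set g : Fin n → S.units → ℂ := fun i u => (φ u : ℂ) * (fg i).2 u with hg_def
  have hfact : ∀ γ : G, ∑ i, f i (S.rngU γ) * (starRingEnd ℂ) (g i (S.srcU γ)) =
      (φ (S.rngU γ) : ℂ) * (φ (S.srcU γ) : ℂ) *
        ∑ i, c i * ((fg i).1 (S.rngU γ) * (starRingEnd ℂ) ((fg i).2 (S.srcU γ))) := by
    intro γ
    rw [Finset.mul_sum]
    apply Finset.sum_congr rfl
    intro i _
    simp only [hf_def, hg_def, map_mul, Complex.conj_ofReal]
    ring
  have hzero : ∀ γ : G, γ ∉ K →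
      ∑ i, f i (S.rngU γ) * (starRingEnd ℂ) (g i (S.srcU γ)) = 0 := by
    intro γ hγ
    rw [hfact]
    have hnand : ¬ (S.rngU γ ∈ T ∧ S.srcU γ ∈ T) := fun hc => hγ ((hKmem γ).mpr hc)
    rcases not_and_or.mp hnand with hmem | hmem <;> rw [hφT _ hmem] <;> simp
  refine ⟨n, f, g, fun i => ?_, ?_, fun γ => ?_⟩
  · refine ⟨?_, ?_, ?_, ?_⟩
    · exact (Complex.continuous_ofReal.comp φ.continuous).mul (continuous_const.mul (hfg1 i))
    · exact hφℂ.mul_right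
    · exact (Complex.continuous_ofReal.comp φ.continuous).mul (hfg3 i)
    · exact hφℂ.mul_right
  · exact closure_minimal (Function.support_subset_iff'.mpr (fun γ hγ => hzero γ hγ)) hKclosed
  · by_cases hγK : γ ∈ K
    · have hzL : h γ ∈ L := Set.mem_image_of_mem h hγK
      set z : L := ⟨h γ, hzL⟩ with hz_def
      have hpz : ∑ i, c i * ((fg i).1 (S.rngU γ) * (starRingEnd ℂ) ((fg i).2 (S.srcU γ))) =
          p z := by
        rw [← hq, ContinuousMap.sum_apply]
        apply Finset.sum_congr rfl
        intro i _
        rw [ContinuousMap.smul_apply, hfgval i z, smul_eq_mul]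
      have hdist : ‖F' z - p z‖ < δ :=
        calc ‖F' z - p z‖ = dist (F' z) (p z) := (dist_eq_norm _ _).symm
          _ ≤ dist F' p := ContinuousMap.dist_apply_le_dist z
          _ < δ := hpd
      have hFz : F' z = F γ := hF'_key γ hγK
      rw [hfact, hpz]
      by_cases hone1 : φ (S.rngU γ) = 1 ∧ φ (S.srcU γ) = 1
      · rw [hone1.1, hone1.2]
        simp only [Complex.ofReal_one, one_mul]
        rw [← hFz]
        exact hdist
      · have hFγ : F γ = 0 := by
          by_contra hne
          have hγsupp : γ ∈ K₀ := subset_closure (Function.mem_support.mpr hne)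
          exact hone1 ⟨hφ_one (Or.inl ⟨γ, hγsupp, rfl⟩), hφ_one (Or.inr ⟨γ, hγsupp, rfl⟩)⟩
        have hpz0 : ‖p z‖ < δ := by
          have h0 : F' z = 0 := by rw [hFz, hFγ]
          calc ‖p z‖ = ‖F' z - p z‖ := by rw [h0, zero_sub, norm_neg]
            _ < δ := hdist
        have hb : ‖(φ (S.rngU γ) : ℂ) * (φ (S.srcU γ) : ℂ)‖ ≤ 1 := by
          rw [norm_mul, Complex.norm_real, Complex.norm_real, Real.norm_eq_abs,
            Real.norm_eq_abs, abs_of_nonneg (hφ_mem (S.rngU γ)).1,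
            abs_of_nonneg (hφ_mem (S.srcU γ)).1]
          exact mul_le_one₀ (hφ_mem (S.rngU γ)).2 (hφ_mem (S.srcU γ)).1 (hφ_mem (S.srcU γ)).2
        calc ‖F γ - (φ (S.rngU γ) : ℂ) * (φ (S.srcU γ) : ℂ) * p z‖
            = ‖(φ (S.rngU γ) : ℂ) * (φ (S.srcU γ) : ℂ)‖ * ‖p z‖ := by
              rw [hFγ, zero_sub, norm_neg, norm_mul]
          _ ≤ 1 * ‖p z‖ := mul_le_mul_of_nonneg_right hb (norm_nonneg _)
          _ = ‖p z‖ := one_mul _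
          _ < δ := hpz0
    · rw [hzero γ hγK]
      have hFγ : F γ = 0 := by
        by_contra hne
        exact hγK (hK₀K (subset_closure (Function.mem_support.mpr hne)))
      rw [hFγ, sub_zero, norm_zero]
      exact hδ
end
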